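/- Let ρ : (0,1] → ℝ be a nonnegative measurable function such that r ↦ r³ρ(r) is integrable on (0,1) and r ↦ r ρ(r) is integrable on (0,1). Suppose there is r* ∈ (0,1] such that the map r ↦ r ρ(r) is nonincreasing on (0, r*]. Then for every δ > 0 and every k ∈ ℤ² \ {0} with r* δ|k| ≥ π, one has δ² λ_δ(k) ≥ π ∫_{r*/√2}^{r*} r ρ(r) dr. -/

import Mathlib

open Real MeasureTheory

/-- Euclidean norm of a nonzero integer vector `k ∈ ℤ²`. -/
noncomputable def knorm2 (k : ℤ × ℤ) : ℝ :=
  Real.sqrt ((k.1 : ℝ) ^ 2 + (k.2 : ℝ) ^ 2)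

/-- The 2D Fourier symbol of the nonlocal diffusion operator:
`λ_δ(k) = (4/δ²) ∫₀^{π/2} ∫₀¹ r ρ(r) (1 − cos(r δ |k| cos θ)) dr dθ`. -/
noncomputable def lambdaDelta2 (ρ : ℝ → ℝ) (δ κ : ℝ) : ℝ :=
  (4 / δ ^ 2) * ∫ θ in (0:ℝ)..(π / 2), ∫ r in (0:ℝ)..1,
    r * ρ r * (1 - Real.cos (r * δ * κ * Real.cos θ))


private lemma aux_numeric : π * (1 - 1/Real.sqrt 2) ≤ 4*((π/6)*(Real.sqrt 2/2 - 1/(π*(Real.sqrt 3/2)))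
    + (π/12)*(Real.sqrt 2/2 - 1/(π*(Real.sqrt 2/2)))
    + (π/12)*(Real.sqrt 2/2 - 1/(π*((1:ℝ)/2)))) := by
  have hπ := Real.pi_gt_d6
  have h2 : Real.sqrt 2 ^ 2 = 2 := Real.sq_sqrt (by norm_num)
  have h3 : Real.sqrt 3 ^ 2 = 3 := Real.sq_sqrt (by norm_num)
  have h2l : (1.414:ℝ) ≤ Real.sqrt 2 := by nlinarith [Real.sqrt_nonneg 2]
  have h2u : Real.sqrt 2 ≤ 1.41422 := by nlinarith [Real.sqrt_nonneg 2]
  have h3l : (1.732:ℝ) ≤ Real.sqrt 3 := by nlinarith [Real.sqrt_nonneg 3]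
  have h2p : (0:ℝ) < Real.sqrt 2 := by linarith
  have h3p : (0:ℝ) < Real.sqrt 3 := by linarith
  have hπp : (0:ℝ) < π := by linarith
  have d1 : 1/(π*(Real.sqrt 3/2)) ≤ 0.368 := by rw [div_le_iff₀ (by positivity)]; nlinarith
  have d2 : 1/(π*(Real.sqrt 2/2)) ≤ 0.451 := by rw [div_le_iff₀ (by positivity)]; nlinarith
  have d3 : 1/(π*((1:ℝ)/2)) ≤ 0.637 := by rw [div_le_iff₀ (by positivity)]; nlinarith
  have l1 : (0.707:ℝ) ≤ 1/Real.sqrt 2 := by rw [le_div_iff₀ h2p]; nlinarith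
  nlinarith [mul_pos hπp h2p]

theorem lambdaDelta2_bound_largerange_antitone (ρ : ℝ → ℝ) (hmeas : Measurable ρ)
    (hnonneg : ∀ r ∈ Set.Ioc (0:ℝ) 1, 0 ≤ ρ r)
    (hint3 : IntervalIntegrable (fun r => r ^ 3 * ρ r) volume 0 1)
    (hint1 : IntervalIntegrable (fun r => r * ρ r) volume 0 1)
    (rs : ℝ) (hrs : rs ∈ Set.Ioc (0:ℝ) 1)
    (hanti : AntitoneOn (fun r => r * ρ r) (Set.Ioc (0:ℝ) rs))
    (δ : ℝ) (hδ : 0 < δ) (k : ℤ × ℤ) (hk : k ≠ 0)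
    (hlarge : π ≤ rs * (δ * knorm2 k)) :
    π * (∫ r in (rs / Real.sqrt 2)..rs, r * ρ r)
      ≤ δ ^ 2 * lambdaDelta2 ρ δ (knorm2 k) := by
  obtain ⟨hrs0, hrs1⟩ := hrs
  set κ := knorm2 k with hκdef
  -- basic numeric facts
  have h2 : Real.sqrt 2 ^ 2 = 2 := Real.sq_sqrt (by norm_num)
  have h3 : Real.sqrt 3 ^ 2 = 3 := Real.sq_sqrt (by norm_num)
  have h2l : (1.414:ℝ) ≤ Real.sqrt 2 := by nlinarith [Real.sqrt_nonneg 2]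
  have h2u : Real.sqrt 2 ≤ 1.41422 := by nlinarith [Real.sqrt_nonneg 2]
  have h3l : (1.732:ℝ) ≤ Real.sqrt 3 := by nlinarith [Real.sqrt_nonneg 3]
  have h2p : (0:ℝ) < Real.sqrt 2 := by linarith
  have h3p : (0:ℝ) < Real.sqrt 3 := by linarith
  have hπp : (0:ℝ) < π := Real.pi_pos
  have hκpos : 0 < κ := by
    have hne : (k.1 : ℝ) ≠ 0 ∨ (k.2 : ℝ) ≠ 0 := by
      by_contra h
      push_neg at h
      exact hk (Prod.ext (by exact_mod_cast h.1) (by exact_mod_cast h.2))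
    have hsum : 0 < (k.1:ℝ)^2 + (k.2:ℝ)^2 := by
      rcases hne with h | h
      · have := sq_pos_of_ne_zero h
        nlinarith [sq_nonneg ((k.2:ℝ))]
      · have := sq_pos_of_ne_zero h
        nlinarith [sq_nonneg ((k.1:ℝ))]
    exact Real.sqrt_pos.mpr hsum
  have hδκ : 0 < δ * κ := mul_pos hδ hκpos
  -- the half-way point b
  set b := rs / Real.sqrt 2 with hbdef
  have hb0 : 0 < b := div_pos hrs0 h2p
  have hbrs : b ≤ rs := by
    rw [hbdef, div_le_iff₀ h2p]; nlinarith
  have hb1 : b ≤ 1 := hbrs.trans hrs1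
  -- notation
  set g : ℝ → ℝ := fun r => r * ρ r with hgdef
  set gs : ℝ := g b with hgsdef
  have hgnn : ∀ r ∈ Set.Ioc (0:ℝ) 1, 0 ≤ g r := fun r hr => mul_nonneg hr.1.le (hnonneg r hr)
  have hgs0 : 0 ≤ gs := hgnn b ⟨hb0, hb1⟩
  -- the inner integral as a function of θ
  set I : ℝ → ℝ := fun θ => ∫ r in (0:ℝ)..1, r * ρ r * (1 - Real.cos (r * δ * κ * Real.cos θ))
    with hIdef
  -- continuity of I
  have hIcont : Continuous I := by
    have heq : I = fun θ => ∫ r in Set.Ioc (0:ℝ) 1,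
        r * ρ r * (1 - Real.cos (r * δ * κ * Real.cos θ)) := by
      funext θ; exact intervalIntegral.integral_of_le (by norm_num : (0:ℝ) ≤ 1)
    rw [heq]
    apply MeasureTheory.continuous_of_dominated (bound := fun r => 2 * |r * ρ r|)
    · intro θ
      exact ((measurable_id.mul hmeas).mul
        ((measurable_const.sub
          (((measurable_id.mul_const δ).mul_const κ).mul_const (Real.cos θ)).cos))).aestronglyMeasurable
    · intro θ
      filter_upwards with r
      have h1 : |1 - Real.cos (r * δ * κ * Real.cos θ)| ≤ 2 := by
        have := Real.neg_one_le_cos (r * δ * κ * Real.cos θ)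
        have := Real.cos_le_one (r * δ * κ * Real.cos θ)
        rw [abs_le]; constructor <;> linarith
      calc ‖r * ρ r * (1 - Real.cos (r * δ * κ * Real.cos θ))‖
          = |r * ρ r| * |1 - Real.cos (r * δ * κ * Real.cos θ)| := abs_mul _ _
        _ ≤ |r * ρ r| * 2 := mul_le_mul_of_nonneg_left h1 (abs_nonneg _)
        _ = 2 * |r * ρ r| := by ring
    · exact hint1.1.norm.const_mul 2
    · filter_upwards with r; fun_prop
  have hcosnn : ∀ x : ℝ, 0 ≤ 1 - Real.cos x := fun x => by
    have := Real.cos_le_one x; linarith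
  -- the key per-θ lower bound
  have key : ∀ c : ℝ, 0 < c → ∀ θ : ℝ, c ≤ Real.cos θ →
      gs * (rs * (Real.sqrt 2 / 2)) - gs * (rs / (π * c)) ≤ I θ := by
    intro c hc θ hcθ
    set a := δ * κ * Real.cos θ with hadef
    have hapos : 0 < a := mul_pos hδκ (lt_of_lt_of_le hc hcθ)
    have haπ : π * c ≤ rs * a := by
      have hcosp : 0 < Real.cos θ := lt_of_lt_of_le hc hcθ
      have h1 : π * c ≤ (rs * (δ * κ)) * Real.cos θ := by nlinarith
      calc π * c ≤ (rs * (δ * κ)) * Real.cos θ := h1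
        _ = rs * a := by rw [hadef]; ring
    have hinv : 1 / a ≤ rs / (π * c) := by
      rw [div_le_div_iff₀ hapos (by positivity)]
      linarith
    -- rewrite the integrand with `a`
    have hfun : (fun r => r * ρ r * (1 - Real.cos (r * δ * κ * Real.cos θ)))
        = fun r => r * ρ r * (1 - Real.cos (a * r)) := by
      funext r; rw [hadef]; ring_nf
    have hconta : Continuous fun r => 1 - Real.cos (a * r) := by fun_prop
    have hGa : IntervalIntegrable (fun r => r * ρ r * (1 - Real.cos (a * r))) volume 0 1 :=
      hint1.mul_continuousOn hconta.continuousOn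
    have hGab : IntervalIntegrable (fun r => r * ρ r * (1 - Real.cos (a * r))) volume 0 b := by
      apply hGa.mono_set
      rw [Set.uIcc_of_le hb0.le, Set.uIcc_of_le (by norm_num : (0:ℝ) ≤ 1)]
      exact Set.Icc_subset_Icc le_rfl hb1
    have hGb1 : IntervalIntegrable (fun r => r * ρ r * (1 - Real.cos (a * r))) volume b 1 := by
      apply hGa.mono_set
      rw [Set.uIcc_of_le hb1, Set.uIcc_of_le (by norm_num : (0:ℝ) ≤ 1)]
      exact Set.Icc_subset_Icc hb0.le le_rfl
    -- step A: drop to [0, b]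
    have hsplit : I θ = (∫ r in (0:ℝ)..b, r * ρ r * (1 - Real.cos (a * r)))
        + ∫ r in b..1, r * ρ r * (1 - Real.cos (a * r)) := by
      show (∫ r in (0:ℝ)..1, r * ρ r * (1 - Real.cos (r * δ * κ * Real.cos θ))) = _
      rw [hfun]
      exact (intervalIntegral.integral_add_adjacent_intervals hGab hGb1).symm
    have htail : 0 ≤ ∫ r in b..1, r * ρ r * (1 - Real.cos (a * r)) := by
      apply intervalIntegral.integral_nonneg hb1
      intro r hr
      exact mul_nonneg (hgnn r ⟨lt_of_lt_of_le hb0 hr.1, hr.2⟩) (hcosnn _)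
    -- step B: compare with constant gs on [0, b]
    have hmono : (∫ r in (0:ℝ)..b, gs * (1 - Real.cos (a * r)))
        ≤ ∫ r in (0:ℝ)..b, r * ρ r * (1 - Real.cos (a * r)) := by
      apply intervalIntegral.integral_mono_on hb0.le
        ((continuous_const.mul hconta).intervalIntegrable _ _) hGab
      intro r hr
      rcases eq_or_lt_of_le hr.1 with h0 | h0
      · simp [← h0]
      · have hrIoc : r ∈ Set.Ioc (0:ℝ) rs := ⟨h0, hr.2.trans hbrs⟩
        have := hanti hrIoc ⟨hb0, hbrs⟩ hr.2
        exact mul_le_mul_of_nonneg_right this (hcosnn _)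
    -- step C: compute the constant integral
    have hcomp : (∫ r in (0:ℝ)..b, gs * (1 - Real.cos (a * r)))
        = gs * (b - Real.sin (a * b) / a) := by
      rw [intervalIntegral.integral_const_mul]
      congr 1
      have hcint : IntervalIntegrable (fun x => Real.cos (a*x)) volume 0 b :=
        (Continuous.intervalIntegrable (by fun_prop) _ _)
      rw [intervalIntegral.integral_sub intervalIntegrable_const hcint,
        intervalIntegral.integral_const,
        intervalIntegral.integral_comp_mul_left Real.cos (ne_of_gt hapos), integral_cos]
      rw [smul_eq_mul, smul_eq_mul, mul_zero, Real.sin_zero]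
      field_simp
      ring
    -- step D: conclude
    have hsin : Real.sin (a * b) / a ≤ rs / (π * c) := by
      calc Real.sin (a * b) / a ≤ 1 / a := by
            gcongr
            exact Real.sin_le_one _
        _ ≤ rs / (π * c) := hinv
    have hbval : rs * (Real.sqrt 2 / 2) = b := by
      rw [hbdef, eq_div_iff (ne_of_gt h2p)]
      linear_combination (rs / 2) * h2
    calc gs * (rs * (Real.sqrt 2 / 2)) - gs * (rs / (π * c))
        ≤ gs * b - gs * (Real.sin (a * b) / a) := by
          rw [hbval]
          have := mul_le_mul_of_nonneg_left hsin hgs0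
          linarith
      _ = gs * (b - Real.sin (a * b) / a) := by ring
      _ = ∫ r in (0:ℝ)..b, gs * (1 - Real.cos (a * r)) := hcomp.symm
      _ ≤ ∫ r in (0:ℝ)..b, r * ρ r * (1 - Real.cos (a * r)) := hmono
      _ ≤ I θ := by rw [hsplit]; linarith
  -- nonnegativity of I
  have hInn : ∀ θ : ℝ, 0 ≤ I θ := by
    intro θ
    apply intervalIntegral.integral_nonneg (by norm_num : (0:ℝ) ≤ 1)
    intro r hr
    rcases eq_or_lt_of_le hr.1 with h0 | h0
    · simp [← h0]
    · exact mul_nonneg (hgnn r ⟨h0, hr.2⟩) (hcosnn _)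
  -- split the θ-integral
  have hii : ∀ u v : ℝ, IntervalIntegrable I volume u v := fun u v =>
    hIcont.intervalIntegrable u v
  have hsplitθ : (∫ θ in (0:ℝ)..(π/2), I θ)
      = (∫ θ in (0:ℝ)..(π/6), I θ) + (∫ θ in (π/6:ℝ)..(π/4), I θ)
        + (∫ θ in (π/4:ℝ)..(π/3), I θ) + (∫ θ in (π/3:ℝ)..(π/2), I θ) := by
    rw [intervalIntegral.integral_add_adjacent_intervals (hii 0 (π/6)) (hii (π/6) (π/4)),
      intervalIntegral.integral_add_adjacent_intervals (hii 0 (π/4)) (hii (π/4) (π/3)),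
      intervalIntegral.integral_add_adjacent_intervals (hii 0 (π/3)) (hii (π/3) (π/2))]
  -- piece bounds
  have piece : ∀ u v c : ℝ, 0 ≤ u → u ≤ v → v ≤ π → 0 < c → c ≤ Real.cos v →
      (v - u) * (gs * (rs * (Real.sqrt 2 / 2)) - gs * (rs / (π * c))) ≤ ∫ θ in u..v, I θ := by
    intro u v c hu huv hvπ hc hcv
    have := intervalIntegral.integral_mono_on huv
      (intervalIntegrable_const
        (c := gs * (rs * (Real.sqrt 2 / 2)) - gs * (rs / (π * c)))) (hii u v)
      (fun θ hθ => key c hc θ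
        (le_trans hcv (Real.cos_le_cos_of_nonneg_of_le_pi (hu.trans hθ.1) hvπ hθ.2)))
    rwa [intervalIntegral.integral_const, smul_eq_mul] at this
  have p1 := piece 0 (π/6) (Real.sqrt 3 / 2) le_rfl (by linarith) (by linarith) (by positivity)
    (by rw [Real.cos_pi_div_six])
  have p2 := piece (π/6) (π/4) (Real.sqrt 2 / 2) (by positivity) (by linarith) (by linarith)
    (by positivity) (by rw [Real.cos_pi_div_four])
  have p3 := piece (π/4) (π/3) (1/2) (by positivity) (by linarith) (by linarith)
    (by norm_num) (by rw [Real.cos_pi_div_three])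
  have p4 : (0:ℝ) ≤ ∫ θ in (π/3:ℝ)..(π/2), I θ :=
    intervalIntegral.integral_nonneg (by linarith) (fun θ _ => hInn θ)
  -- bound on the target integral
  have hT : (∫ r in b..rs, g r) ≤ gs * (rs - b) := by
    have := intervalIntegral.integral_mono_on hbrs
      (hint1.mono_set (by
        rw [Set.uIcc_of_le hbrs, Set.uIcc_of_le (by norm_num : (0:ℝ) ≤ 1)]
        exact Set.Icc_subset_Icc hb0.le hrs1))
      (intervalIntegrable_const (c := gs))
      (fun r hr => hanti ⟨hb0, hbrs⟩ ⟨lt_of_lt_of_le hb0 hr.1, hr.2⟩ hr.1)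
    rw [intervalIntegral.integral_const, smul_eq_mul] at this
    linarith [this]
  -- main numeric inequality
  have hnum := aux_numeric
  -- multiply by gs * rs ≥ 0
  have hGnn : 0 ≤ gs * rs := mul_nonneg hgs0 hrs0.le
  have hmul := mul_le_mul_of_nonneg_right hnum hGnn
  -- unfold lambda
  have hlam : δ ^ 2 * lambdaDelta2 ρ δ κ = 4 * ∫ θ in (0:ℝ)..(π/2), I θ := by
    rw [lambdaDelta2]
    have hδne : δ ≠ 0 := ne_of_gt hδ
    field_simp
    apply intervalIntegral.integral_congr
    intro θ _
    simp only [hIdef]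
    congr 1
    ext r
    ring
  rw [hlam, hsplitθ]
  have e1 : π * (gs * (rs - b)) = π * (1 - 1/Real.sqrt 2) * (gs * rs) := by
    rw [hbdef]; ring
  have e2 : 4*((π/6)*(Real.sqrt 2/2 - 1/(π*(Real.sqrt 3/2)))
      + (π/12)*(Real.sqrt 2/2 - 1/(π*(Real.sqrt 2/2)))
      + (π/12)*(Real.sqrt 2/2 - 1/(π*((1:ℝ)/2)))) * (gs * rs)
      = 4*((π/6 - 0) * (gs * (rs * (Real.sqrt 2 / 2)) - gs * (rs / (π * (Real.sqrt 3 / 2))))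
        + (π/4 - π/6) * (gs * (rs * (Real.sqrt 2 / 2)) - gs * (rs / (π * (Real.sqrt 2 / 2))))
        + (π/3 - π/4) * (gs * (rs * (Real.sqrt 2 / 2)) - gs * (rs / (π * (1/2))))) := by
    ring
  calc π * ∫ r in b..rs, g r
      ≤ π * (gs * (rs - b)) := by
        apply mul_le_mul_of_nonneg_left hT hπp.le
    _ = π * (1 - 1/Real.sqrt 2) * (gs * rs) := e1
    _ ≤ 4*((π/6)*(Real.sqrt 2/2 - 1/(π*(Real.sqrt 3/2)))
        + (π/12)*(Real.sqrt 2/2 - 1/(π*(Real.sqrt 2/2)))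
        + (π/12)*(Real.sqrt 2/2 - 1/(π*((1:ℝ)/2)))) * (gs * rs) := hmul
    _ = 4*((π/6 - 0) * (gs * (rs * (Real.sqrt 2 / 2)) - gs * (rs / (π * (Real.sqrt 3 / 2))))
        + (π/4 - π/6) * (gs * (rs * (Real.sqrt 2 / 2)) - gs * (rs / (π * (Real.sqrt 2 / 2))))
        + (π/3 - π/4) * (gs * (rs * (Real.sqrt 2 / 2)) - gs * (rs / (π * (1/2))))) := e2
    _ ≤ 4 * ((∫ θ in (0:ℝ)..(π/6), I θ) + (∫ θ in (π/6:ℝ)..(π/4), I θ)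
        + (∫ θ in (π/4:ℝ)..(π/3), I θ) + (∫ θ in (π/3:ℝ)..(π/2), I θ)) := by
        linarith [p1, p2, p3, p4]
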